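/- Let C ∈ ℝ^{V×k} have full column rank k, let δ > 0, and let C^δ be the δ-enlargement of C. Then for every point x of conv(C^δ) that can be written x = ∑_{f=1}^k α_f c_f^δ with α in the simplex Δ^{k−1} and α_f = 0 for at least one index f (i.e., x on the relative boundary of conv(C^δ)), the Euclidean distance from x to conv(C) satisfies δ ≤ dist(x, conv(C)) ≤ κ(C)·k·δ, where κ(C) = σ_max(C)/σ⁺_min(C). -/

import Mathlib

open scoped BigOperators ENNReal NNReal
open MeasureTheory Matrix

noncomputable section

/-- Euclidean (ℓ²) norm of a vector in `Fin m → ℝ`. -/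
def l2 {m : ℕ} (x : Fin m → ℝ) : ℝ := Real.sqrt (∑ i, x i ^ 2)

/-- The `f`-th standard basis vector of `ℝ^k`. -/
def eVec (k : ℕ) (f : Fin k) : Fin k → ℝ := fun i => if i = f then 1 else 0

/-- Euclidean distance from a point to a set in `Fin p → ℝ`. -/
def distToSet {p : ℕ} (x : Fin p → ℝ) (S : Set (Fin p → ℝ)) : ℝ :=
  sInf ((fun y => l2 (x - y)) '' S)

/-- Smallest singular value via the variational characterization `min_{‖x‖₂=1} ‖Ax‖₂`
(this is the smallest positive singular value when `A` has full column rank). -/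
def sigMin {p q : ℕ} (A : Matrix (Fin p) (Fin q) ℝ) : ℝ :=
  sInf ((fun x => l2 (A.mulVec x)) '' {x | l2 x = 1})

/-- Largest singular value, via `max_{‖x‖₂=1} ‖Ax‖₂`. -/
def sigMax {p q : ℕ} (A : Matrix (Fin p) (Fin q) ℝ) : ℝ :=
  sSup ((fun x => l2 (A.mulVec x)) '' {x | l2 x = 1})

/-- `ρ(C) = k / σ⁺_min(C)`. -/
def rho {p q : ℕ} (C : Matrix (Fin p) (Fin q) ℝ) : ℝ := q / sigMin C

/-- The `δ`-enlargement of `C`: each column is pushed away from the barycenter `c̄` of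
the columns by the factor `1 + ρ(C)δ`. -/
def enlarge {p q : ℕ} (C : Matrix (Fin p) (Fin q) ℝ) (δ : ℝ) :
    Matrix (Fin p) (Fin q) ℝ :=
  Matrix.of fun i f =>
    (1 + rho C * δ) * (C i f - (∑ g, C i g) / q) + (∑ g, C i g) / q

/- ### Auxiliary lemmas -/

lemma l2_eq_norm {m : ℕ} (x : Fin m → ℝ) :
    l2 x = ‖(WithLp.equiv 2 (Fin m → ℝ)).symm x‖ := by
  rw [EuclideanSpace.norm_eq, l2]
  congr 1
  refine Finset.sum_congr rfl fun i _ => ?_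
  show x i ^ 2 = ‖x i‖ ^ 2
  rw [Real.norm_eq_abs, sq_abs]

lemma l2_nonneg {m : ℕ} (x : Fin m → ℝ) : 0 ≤ l2 x := Real.sqrt_nonneg _

lemma l2_smul {m : ℕ} (c : ℝ) (x : Fin m → ℝ) : l2 (c • x) = |c| * l2 x := by
  have hs : (WithLp.equiv 2 (Fin m → ℝ)).symm (c • x) = c • (WithLp.equiv 2 (Fin m → ℝ)).symm x := rfl
  rw [l2_eq_norm, l2_eq_norm, hs, norm_smul, Real.norm_eq_abs]

lemma l2_pos {m : ℕ} {x : Fin m → ℝ} (hx : x ≠ 0) : 0 < l2 x := by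
  rw [l2_eq_norm]
  rw [norm_pos_iff]
  intro h
  apply hx
  have := congrArg (WithLp.equiv 2 (Fin m → ℝ)) h
  simpa using this

lemma abs_le_l2 {m : ℕ} (x : Fin m → ℝ) (j : Fin m) : |x j| ≤ l2 x := by
  rw [l2, ← Real.sqrt_sq_eq_abs]
  exact Real.sqrt_le_sqrt (Finset.single_le_sum (fun i _ => sq_nonneg (x i)) (Finset.mem_univ j))

/-- The linear map version of `mulVec` between Euclidean spaces. -/
def Lmap {p q : ℕ} (A : Matrix (Fin p) (Fin q) ℝ) :
    EuclideanSpace ℝ (Fin q) →ₗ[ℝ] EuclideanSpace ℝ (Fin p) :=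
  (WithLp.linearEquiv 2 ℝ (Fin p → ℝ)).symm.toLinearMap ∘ₗ A.mulVecLin ∘ₗ
    (WithLp.linearEquiv 2 ℝ (Fin q → ℝ)).toLinearMap

lemma Lmap_apply {p q : ℕ} (A : Matrix (Fin p) (Fin q) ℝ) (y : EuclideanSpace ℝ (Fin q)) :
    Lmap A y = (WithLp.equiv 2 (Fin p → ℝ)).symm (A.mulVec (WithLp.equiv 2 (Fin q → ℝ) y)) := by
  rfl

lemma image_eq {p q : ℕ} (A : Matrix (Fin p) (Fin q) ℝ) :
    (fun x => l2 (A.mulVec x)) '' {x | l2 x = 1}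
      = (fun y => ‖Lmap A y‖) '' Metric.sphere (0 : EuclideanSpace ℝ (Fin q)) 1 := by
  ext r
  constructor
  · rintro ⟨v, hv, rfl⟩
    refine ⟨(WithLp.equiv 2 (Fin q → ℝ)).symm v, ?_, ?_⟩
    · rw [Metric.mem_sphere, dist_zero_right, ← l2_eq_norm]
      exact hv
    · show ‖Lmap A ((WithLp.equiv 2 (Fin q → ℝ)).symm v)‖ = l2 (A.mulVec v)
      rw [Lmap_apply, Equiv.apply_symm_apply, ← l2_eq_norm]
  · rintro ⟨y, hy, rfl⟩
    refine ⟨WithLp.equiv 2 (Fin q → ℝ) y, ?_, ?_⟩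
    · have : l2 (WithLp.equiv 2 (Fin q → ℝ) y) = ‖y‖ := by
        rw [l2_eq_norm, Equiv.symm_apply_apply]
      rw [Metric.mem_sphere, dist_zero_right] at hy
      show l2 (WithLp.equiv 2 (Fin q → ℝ) y) = 1
      rw [this]; exact hy
    · show l2 (A.mulVec (WithLp.equiv 2 (Fin q → ℝ) y)) = ‖Lmap A y‖
      rw [Lmap_apply, l2_eq_norm]

lemma isCompact_image {p q : ℕ} (A : Matrix (Fin p) (Fin q) ℝ) :
    IsCompact ((fun x => l2 (A.mulVec x)) '' {x | l2 x = 1}) := by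
  rw [image_eq]
  exact (isCompact_sphere _ _).image ((Lmap A).continuous_of_finiteDimensional.norm)

lemma l2_eVec {k : ℕ} (f : Fin k) : l2 (eVec k f) = 1 := by
  rw [l2]
  have : (∑ i, eVec k f i ^ 2) = 1 := by
    simp [eVec, Finset.sum_ite_eq']
  rw [this, Real.sqrt_one]

lemma image_nonempty {p q : ℕ} (A : Matrix (Fin p) (Fin q) ℝ) (f : Fin q) :
    ((fun x => l2 (A.mulVec x)) '' {x | l2 x = 1}).Nonempty :=
  ⟨_, ⟨eVec q f, l2_eVec f, rfl⟩⟩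

lemma image_bddBelow {p q : ℕ} (A : Matrix (Fin p) (Fin q) ℝ) :
    BddBelow ((fun x => l2 (A.mulVec x)) '' {x | l2 x = 1}) := by
  refine ⟨0, ?_⟩
  rintro r ⟨v, _, rfl⟩
  exact l2_nonneg _

lemma sigMin_le {p q : ℕ} (A : Matrix (Fin p) (Fin q) ℝ) {v : Fin q → ℝ} (hv : l2 v = 1) :
    sigMin A ≤ l2 (A.mulVec v) :=
  csInf_le (image_bddBelow A) ⟨v, hv, rfl⟩

lemma sigMin_mul_le {p q : ℕ} (A : Matrix (Fin p) (Fin q) ℝ) (hs : 0 ≤ sigMin A)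
    (v : Fin q → ℝ) : sigMin A * l2 v ≤ l2 (A.mulVec v) := by
  rcases eq_or_ne v 0 with rfl | hv
  · have h1 : l2 (0 : Fin q → ℝ) = 0 := by simp [l2]
    have h2 : l2 (0 : Fin p → ℝ) = 0 := by simp [l2]
    simp [Matrix.mulVec_zero, h1, h2]
  · have ht : 0 < l2 v := l2_pos hv
    have hunit : l2 ((l2 v)⁻¹ • v) = 1 := by
      rw [l2_smul, abs_of_pos (inv_pos.mpr ht), inv_mul_cancel₀ ht.ne']
    have h1 := sigMin_le A hunit
    rw [Matrix.mulVec_smul, l2_smul, abs_of_pos (inv_pos.mpr ht)] at h1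
    calc sigMin A * l2 v ≤ ((l2 v)⁻¹ * l2 (A.mulVec v)) * l2 v := by
          exact mul_le_mul_of_nonneg_right h1 ht.le
      _ = l2 (A.mulVec v) := by field_simp

lemma le_sigMax {p q : ℕ} (A : Matrix (Fin p) (Fin q) ℝ) {v : Fin q → ℝ} (hv : l2 v = 1) :
    l2 (A.mulVec v) ≤ sigMax A :=
  le_csSup (isCompact_image A).bddAbove ⟨v, hv, rfl⟩

lemma l2_mulVec_le {p q : ℕ} (A : Matrix (Fin p) (Fin q) ℝ)
    (v : Fin q → ℝ) : l2 (A.mulVec v) ≤ sigMax A * l2 v := by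
  rcases eq_or_ne v 0 with rfl | hv
  · have h1 : l2 (0 : Fin q → ℝ) = 0 := by simp [l2]
    have h2 : l2 (0 : Fin p → ℝ) = 0 := by simp [l2]
    simp [Matrix.mulVec_zero, h1, h2]
  · have ht : 0 < l2 v := l2_pos hv
    have hunit : l2 ((l2 v)⁻¹ • v) = 1 := by
      rw [l2_smul, abs_of_pos (inv_pos.mpr ht), inv_mul_cancel₀ ht.ne']
    have h1 := le_sigMax A hunit
    rw [Matrix.mulVec_smul, l2_smul, abs_of_pos (inv_pos.mpr ht)] at h1
    calc l2 (A.mulVec v) = ((l2 v)⁻¹ * l2 (A.mulVec v)) * l2 v := by field_simp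
      _ ≤ sigMax A * l2 v := mul_le_mul_of_nonneg_right h1 ht.le

lemma sigMin_pos {p q : ℕ} (A : Matrix (Fin p) (Fin q) ℝ) (f : Fin q)
    (hinj : Function.Injective A.mulVec) : 0 < sigMin A := by
  have hmem : sigMin A ∈ (fun x => l2 (A.mulVec x)) '' {x | l2 x = 1} :=
    (isCompact_image A).sInf_mem (image_nonempty A f)
  obtain ⟨v, hv, hvr⟩ := hmem
  have hv0 : v ≠ 0 := by
    intro h
    rw [h] at hv
    simp [l2] at hv
  have : A.mulVec v ≠ 0 := by
    intro h
    apply hv0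
    apply hinj
    rw [h, Matrix.mulVec_zero]
  rw [← hvr]
  exact l2_pos this

lemma sigMax_nonneg {p q : ℕ} (A : Matrix (Fin p) (Fin q) ℝ) (f : Fin q) :
    0 ≤ sigMax A := by
  refine le_trans (l2_nonneg (A.mulVec (eVec q f))) ?_
  exact le_sigMax A (l2_eVec f)

/-- The distance from any relative-boundary point of the `δ`-enlargement of `conv(C)` to
`conv(C)` is between `δ` and `κ(C)·k·δ`. -/
theorem stmt14 {V k : ℕ} (C : Matrix (Fin V) (Fin k) ℝ) (hrank : C.rank = k)
    (δ : ℝ) (hδ : 0 < δ) (α : Fin k → ℝ) (hα0 : ∀ f, 0 ≤ α f) (hα1 : ∑ f, α f = 1)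
    (f₀ : Fin k) (hf₀ : α f₀ = 0) (x : Fin V → ℝ)
    (hx : x = fun i => ∑ f, α f * enlarge C δ i f) :
    δ ≤ distToSet x (convexHull ℝ (Set.range fun j : Fin k => fun i => C i j)) ∧
    distToSet x (convexHull ℝ (Set.range fun j : Fin k => fun i => C i j)) ≤
      (sigMax C / sigMin C) * k * δ := by
  classical
  have hk : 0 < k := f₀.pos
  have hkR : (0:ℝ) < (k:ℝ) := by exact_mod_cast hk
  -- injectivity of mulVec from full column rank
  have hinj : Function.Injective C.mulVec := by
    have hker : LinearMap.ker C.mulVecLin = ⊥ := by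
      have hadd := LinearMap.finrank_range_add_finrank_ker C.mulVecLin
      have hfin : Module.finrank ℝ ↥(LinearMap.range C.mulVecLin) = k := hrank
      rw [hfin, Module.finrank_fin_fun] at hadd
      have h0 : Module.finrank ℝ ↥(LinearMap.ker C.mulVecLin) = 0 := by omega
      exact Submodule.finrank_eq_zero.mp h0
    intro a b hab
    exact LinearMap.ker_eq_bot.mp hker hab
  have hσmin : 0 < sigMin C := sigMin_pos C f₀ hinj
  have hσmax : 0 ≤ sigMax C := sigMax_nonneg C f₀
  set s : ℝ := rho C * δ with hs
  have hsval : s = (k:ℝ) * δ / sigMin C := by rw [hs, rho]; ring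
  have hspos : 0 < s := by rw [hsval]; positivity
  set w : Fin k → ℝ := fun f => (1 + s) * α f - s * (k:ℝ)⁻¹ with hw
  -- x = C *ᵥ w
  have hxw : x = C.mulVec w := by
    rw [hx]; funext i
    show ∑ f, α f * enlarge C δ i f = ∑ f, C i f * w f
    calc ∑ f, α f * enlarge C δ i f
        = ∑ f, ((1 + s) * (C i f * α f) - (s * ((∑ g, C i g) / (k:ℝ))) * α f) := by
          refine Finset.sum_congr rfl fun f _ => ?_
          simp only [enlarge, Matrix.of_apply, ← hs, Nat.cast_ofNat]
          push_cast
          ring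
      _ = (1 + s) * (∑ f, C i f * α f) - (s * ((∑ g, C i g) / (k:ℝ))) * ∑ f, α f := by
          rw [Finset.sum_sub_distrib, ← Finset.mul_sum, ← Finset.mul_sum]
      _ = (1 + s) * (∑ f, C i f * α f) - (s * (k:ℝ)⁻¹) * ∑ f, C i f := by
          rw [hα1, mul_one, div_eq_mul_inv]; ring
      _ = ∑ f, C i f * w f := by
          symm
          calc ∑ f, C i f * w f
              = ∑ f, ((1 + s) * (C i f * α f) - (s * (k:ℝ)⁻¹) * C i f) :=
                Finset.sum_congr rfl fun f _ => by simp only [hw]; ring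
            _ = (1 + s) * (∑ f, C i f * α f) - (s * (k:ℝ)⁻¹) * ∑ f, C i f := by
                rw [Finset.sum_sub_distrib, ← Finset.mul_sum, ← Finset.mul_sum]
  set col : Fin k → Fin V → ℝ := (fun j : Fin k => fun i => C i j) with hcoldef
  set S : Set (Fin V → ℝ) := convexHull ℝ (Set.range col) with hSdef
  have hcol : ∀ β : Fin k → ℝ, C.mulVec β = ∑ f, β f • col f := by
    intro β; funext i
    rw [Finset.sum_apply]
    show ∑ f, C i f * β f = ∑ f, (β f • col f) i
    refine Finset.sum_congr rfl fun f _ => ?_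
    simp [hcoldef, mul_comm]
  have hmemS : ∀ β : Fin k → ℝ, (∀ f, 0 ≤ β f) → ∑ f, β f = 1 → C.mulVec β ∈ S := by
    intro β h0 h1
    exact mem_convexHull_of_exists_fintype β col h0 h1
      (fun f => Set.mem_range_self f) (hcol β).symm
  have hrepS : ∀ z ∈ S, ∃ β : Fin k → ℝ, (∀ f, 0 ≤ β f) ∧ (∑ f, β f = 1) ∧ z = C.mulVec β := by
    intro z hz
    rw [hSdef, convexHull_range_eq_exists_affineCombination] at hz
    obtain ⟨t, wgt, hw0, hw1, hzeq⟩ := hz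
    refine ⟨fun f => if f ∈ t then wgt f else 0, fun f => ?_, ?_, ?_⟩
    · by_cases hf : f ∈ t
      · simp only [hf, if_true]; exact hw0 f hf
      · simp [hf]
    · rw [Finset.sum_ite_mem, Finset.univ_inter]
      exact hw1
    · rw [hcol, ← hzeq, Finset.affineCombination_eq_linear_combination t _ _ hw1]
      rw [← Finset.sum_subset (Finset.subset_univ t) (fun f _ hf => by simp [hf])]
      exact Finset.sum_congr rfl fun f hf => by simp [hf]
  have hbdd : BddBelow ((fun y => l2 (x - y)) '' S) := by
    refine ⟨0, ?_⟩
    rintro d ⟨z, _, rfl⟩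
    exact l2_nonneg _
  have hne : ((fun y => l2 (x - y)) '' S).Nonempty := by
    refine ⟨_, ⟨col f₀, ?_, rfl⟩⟩
    exact subset_convexHull ℝ _ (Set.mem_range_self f₀)
  have hsk : s * (k:ℝ)⁻¹ = δ / sigMin C := by
    rw [hsval]; field_simp
  constructor
  · -- lower bound
    refine le_csInf hne ?_
    rintro d ⟨z, hzS, rfl⟩
    obtain ⟨β, hβ0, hβ1, rfl⟩ := hrepS z hzS
    have hxz : x - C.mulVec β = C.mulVec (w - β) := by
      rw [hxw, Matrix.mulVec_sub]
    have hwf : (w - β) f₀ = -(s * (k:ℝ)⁻¹ + β f₀) := by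
      simp only [Pi.sub_apply, hw, hf₀]; ring
    have habs : |(w - β) f₀| = s * (k:ℝ)⁻¹ + β f₀ := by
      rw [hwf, abs_neg, abs_of_nonneg]
      have := hβ0 f₀
      positivity
    calc δ = sigMin C * (δ / sigMin C) := by field_simp
      _ ≤ sigMin C * |(w - β) f₀| := by
          refine mul_le_mul_of_nonneg_left ?_ hσmin.le
          rw [habs, ← hsk]
          have := hβ0 f₀
          linarith
      _ ≤ sigMin C * l2 (w - β) :=
          mul_le_mul_of_nonneg_left (abs_le_l2 _ f₀) hσmin.le
      _ ≤ l2 (C.mulVec (w - β)) := sigMin_mul_le C hσmin.le _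
      _ = l2 (x - C.mulVec β) := by rw [hxz]
  · -- upper bound
    have hyS : C.mulVec α ∈ S := hmemS α hα0 hα1
    have hle : distToSet x S ≤ l2 (x - C.mulVec α) :=
      csInf_le hbdd ⟨_, hyS, rfl⟩
    set u : Fin k → ℝ := fun _ => (k:ℝ)⁻¹ with hu
    have hxy : x - C.mulVec α = C.mulVec (s • (α - u)) := by
      have hvec : w - α = s • (α - u) := by
        funext f
        simp only [Pi.sub_apply, Pi.smul_apply, hw, hu, smul_eq_mul]
        ring
      rw [hxw, ← Matrix.mulVec_sub, hvec]
    have hαu : l2 (α - u) ≤ 1 := by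
      have hsq : ∑ f, α f ^ 2 ≤ 1 := by
        have h := Finset.sum_sq_le_sq_sum_of_nonneg (s := Finset.univ) (f := α)
          (fun f _ => hα0 f)
        rw [hα1] at h
        simpa using h
      have hsum : ∑ f, ((α - u) f) ^ 2 = (∑ f, α f ^ 2) - (k:ℝ)⁻¹ := by
        have hterm : ∀ f : Fin k, ((α - u) f) ^ 2
            = α f ^ 2 - (2 * (k:ℝ)⁻¹) * α f + (k:ℝ)⁻¹ ^ 2 := by
          intro f; simp only [Pi.sub_apply, hu]; ring
        rw [Finset.sum_congr rfl fun f _ => hterm f]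
        rw [Finset.sum_add_distrib, Finset.sum_sub_distrib, ← Finset.mul_sum, hα1,
          Finset.sum_const, Finset.card_univ, Fintype.card_fin, nsmul_eq_mul]
        field_simp
        ring
      rw [l2]
      have h1 : ∑ f, ((α - u) f) ^ 2 ≤ 1 := by
        rw [hsum]
        have : (0:ℝ) ≤ (k:ℝ)⁻¹ := by positivity
        linarith
      calc Real.sqrt (∑ f, ((α - u) f) ^ 2) ≤ Real.sqrt 1 := Real.sqrt_le_sqrt h1
        _ = 1 := Real.sqrt_one
    have hfin : l2 (x - C.mulVec α) ≤ (sigMax C / sigMin C) * k * δ := by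
      rw [hxy, Matrix.mulVec_smul, l2_smul, abs_of_pos hspos]
      have h2 : l2 (C.mulVec (α - u)) ≤ sigMax C * l2 (α - u) := l2_mulVec_le C _
      have h3 : sigMax C * l2 (α - u) ≤ sigMax C := by
        calc sigMax C * l2 (α - u) ≤ sigMax C * 1 :=
              mul_le_mul_of_nonneg_left hαu hσmax
          _ = sigMax C := mul_one _
      have h4 : s * l2 (C.mulVec (α - u)) ≤ s * sigMax C :=
        mul_le_mul_of_nonneg_left (h2.trans h3) hspos.le
      refine h4.trans (le_of_eq ?_)
      rw [hsval]
      field_simp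
    exact hle.trans hfin
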